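/- With the setup of the biased-crossover lemma (parent x, mutation rate χ/n, noise rate q/n, Hamming distance d to a fixed target), for every z ∈ {0,1}^n with P[x̃' = z] > 0: E[d(x') | x̃' = z] ≤ d(x) + n·p₃ + (d(z) - d(x))·p₄, where p₃ = (qχ/n²)/((1-χ/n)(1-q/n)+qχ/n²) and p₄ = (1-q/n)(χ/n)/((1-χ/n)(q/n)+(χ/n)(1-q/n)). -/

import Mathlib

open MeasureTheory

/-- Measure on Bool: `true` (a flip) with probability `p`, `false` with probability `1-p`. -/
noncomputable def bernoulliMeasure (p : ℝ) : Measure Bool :=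
  ENNReal.ofReal p • Measure.dirac true + ENNReal.ofReal (1 - p) • Measure.dirac false

instance (p : ℝ) : IsFiniteMeasure (bernoulliMeasure p) := by
  constructor
  simp [bernoulliMeasure, Measure.add_apply, Measure.smul_apply]

/-- Joint distribution of the mutation flip vector and the noise flip vector:
each of the `n` mutation flips happens independently with probability `χ/n`,
each of the `n` noise flips independently with probability `q/n`. -/
noncomputable def mutNoise (n : ℕ) (χ q : ℝ) : Measure ((Fin n → Bool) × (Fin n → Bool)) :=
  (Measure.pi fun _ => bernoulliMeasure (χ / n)).prod
    (Measure.pi fun _ => bernoulliMeasure (q / n))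

/-- The (noiseless) offspring `x'`: parent `x` with the mutation flips applied. -/
def offspring {n : ℕ} (x : Fin n → Bool) (ω : (Fin n → Bool) × (Fin n → Bool)) :
    Fin n → Bool := fun i => Bool.xor (x i) (ω.1 i)

/-- The noisy offspring `x̃'`: offspring with the noise flips applied. -/
def noisyOffspring {n : ℕ} (x : Fin n → Bool) (ω : (Fin n → Bool) × (Fin n → Bool)) :
    Fin n → Bool := fun i => Bool.xor (Bool.xor (x i) (ω.1 i)) (ω.2 i)

/-- Hamming distance. -/
def distToTarget {n : ℕ} (y t : Fin n → Bool) : ℕ :=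
  (Finset.univ.filter fun i => y i ≠ t i).card

noncomputable def afun (n : ℕ) (x z : Fin n → Bool) (χ q : ℝ) (i : Fin n) (b : Bool) : ℝ :=
  (if b then χ/n else 1-χ/n) * (if Bool.xor (Bool.xor (x i) b) (z i) then q/n else 1-q/n)

instance (n : ℕ) (χ q : ℝ) : IsFiniteMeasure (mutNoise n χ q) := by
  unfold mutNoise; infer_instance

def evec (n : ℕ) (x z : Fin n → Bool) (u : Fin n → Bool) : Fin n → Bool :=
  fun i => Bool.xor (Bool.xor (x i) (u i)) (z i)

lemma bern_singleton (p : ℝ) (b : Bool) :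
    bernoulliMeasure p {b} = ENNReal.ofReal (if b then p else 1 - p) := by
  cases b <;> simp [bernoulliMeasure]

lemma mutNoise_singleton (n : ℕ) (χ q : ℝ) (u v : Fin n → Bool) :
    mutNoise n χ q {(u, v)}
      = (∏ i, bernoulliMeasure (χ/n) {u i}) * ∏ i, bernoulliMeasure (q/n) {v i} := by
  rw [mutNoise, ← Set.singleton_prod_singleton, Measure.prod_prod, ← Set.univ_pi_singleton u,
    Measure.pi_pi, ← Set.univ_pi_singleton v, Measure.pi_pi]

lemma weight_eq (n : ℕ) (x z : Fin n → Bool) (χ q : ℝ)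
    (hχ0 : 0 ≤ χ/n) (hχ1 : χ/n ≤ 1) (hq0 : 0 ≤ q/n) (hq1 : q/n ≤ 1) (u : Fin n → Bool) :
    (mutNoise n χ q {(u, evec n x z u)}).toReal = ∏ i, afun n x z χ q i (u i) := by
  rw [mutNoise_singleton, ENNReal.toReal_mul, ENNReal.toReal_prod, ENNReal.toReal_prod,
    ← Finset.prod_mul_distrib]
  refine Finset.prod_congr rfl fun i _ => ?_
  rw [bern_singleton, bern_singleton, ENNReal.toReal_ofReal, ENNReal.toReal_ofReal, afun, evec]
  · split <;> linarith
  · split <;> linarith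

lemma mem_iff (n : ℕ) (x z : Fin n → Bool) (u v : Fin n → Bool) :
    ((u, v) ∈ {ω : (Fin n → Bool) × (Fin n → Bool) | noisyOffspring x ω = z}) ↔ v = evec n x z u := by
  have bool_iff : ∀ a b c : Bool, (Bool.xor a b = c ↔ b = Bool.xor a c) := by decide
  simp only [Set.mem_setOf_eq, noisyOffspring, evec, funext_iff]
  exact forall_congr' fun i => bool_iff _ _ _

lemma restrict_integral (n : ℕ) (x z : Fin n → Bool) (χ q : ℝ)
    (f : ((Fin n → Bool) × (Fin n → Bool)) → ℝ) :
    ∫ ω, f ω ∂(mutNoise n χ q).restrict {ω | noisyOffspring x ω = z}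
      = ∑ u, (mutNoise n χ q {(u, evec n x z u)}).toReal * f (u, evec n x z u) := by
  set s : Set ((Fin n → Bool) × (Fin n → Bool)) := {ω | noisyOffspring x ω = z} with hs
  have hsingle : ∀ u v : Fin n → Bool,
      ({(u, v)} : Set ((Fin n → Bool) × (Fin n → Bool))) ∩ s
        = if v = evec n x z u then {(u, v)} else ∅ := by
    intro u v
    split_ifs with h
    · rw [Set.inter_eq_self_of_subset_left]
      simp only [Set.singleton_subset_iff]
      exact (mem_iff n x z u v).mpr h
    · rw [Set.eq_empty_iff_forall_notMem]
      rintro ω ⟨rfl, hω⟩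
      exact h ((mem_iff n x z u v).mp hω)
  rw [integral_fintype Integrable.of_finite]
  simp only [Measure.real_def]
  rw [Fintype.sum_prod_type]
  refine Finset.sum_congr rfl fun u _ => ?_
  have : ∀ v : Fin n → Bool,
      ((mutNoise n χ q).restrict s {(u, v)}).toReal • f (u, v)
        = if v = evec n x z u then (mutNoise n χ q {(u, v)}).toReal * f (u, v) else 0 := by
    intro v
    rw [Measure.restrict_apply (measurableSet_singleton _), hsingle u v]
    split_ifs with h
    · rw [smul_eq_mul]
    · simp
  simp_rw [this]
  rw [Finset.sum_ite_eq' Finset.univ (evec n x z u)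
    (fun v => (mutNoise n χ q {(u, v)}).toReal * f (u, v))]
  rw [if_pos (Finset.mem_univ _)]

lemma sum_prod_bool {n : ℕ} (α : Fin n → Bool → ℝ) :
    ∑ u : Fin n → Bool, ∏ i, α i (u i) = ∏ i, (α i true + α i false) := by
  have := Finset.prod_univ_sum (fun _ : Fin n => (Finset.univ : Finset Bool)) (fun i b => α i b)
  rw [Fintype.piFinset_univ] at this
  rw [← this]
  simp [Fintype.sum_bool]

lemma sum_prod_bool_weighted {n : ℕ} (α c : Fin n → Bool → ℝ) :
    ∑ u : Fin n → Bool, (∏ i, α i (u i)) * (∑ k, c k (u k))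
      = ∑ k, (α k true * c k true + α k false * c k false)
          * ∏ i ∈ Finset.univ.erase k, (α i true + α i false) := by
  simp_rw [Finset.mul_sum]
  rw [Finset.sum_comm]
  refine Finset.sum_congr rfl fun k _ => ?_
  set β : Fin n → Bool → ℝ := fun i b => if i = k then α i b * c i b else α i b with hβ
  have h1 : ∀ u : Fin n → Bool, (∏ i, α i (u i)) * c k (u k) = ∏ i, β i (u i) := by
    intro u
    rw [← Finset.mul_prod_erase Finset.univ (fun i => β i (u i)) (Finset.mem_univ k),
        ← Finset.mul_prod_erase Finset.univ (fun i => α i (u i)) (Finset.mem_univ k)]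
    have h2 : ∏ i ∈ Finset.univ.erase k, β i (u i) = ∏ i ∈ Finset.univ.erase k, α i (u i) :=
      Finset.prod_congr rfl fun i hi => by simp [hβ, (Finset.mem_erase.mp hi).1]
    rw [h2, hβ]
    simp; ring
  simp_rw [h1]
  rw [sum_prod_bool β]
  rw [← Finset.mul_prod_erase Finset.univ (fun i => β i true + β i false) (Finset.mem_univ k)]
  have h2 : ∏ i ∈ Finset.univ.erase k, (β i true + β i false)
      = ∏ i ∈ Finset.univ.erase k, (α i true + α i false) :=
    Finset.prod_congr rfl fun i hi => by simp [hβ, (Finset.mem_erase.mp hi).1]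
  rw [h2, hβ]
  simp


lemma abcase1 (a b : ℝ) : a*b/(a*b+(1-a)*(1-b)) ≤ a*b/((1-a)*(1-b)+a*b) := le_of_eq (by ring)

lemma abcase2 (a b : ℝ) (ha0 : 0<a) (ha1 : a<1) (hb0 : 0<b) (hb1 : b<1) :
    (1-a)*(1-b)/(a*b+(1-a)*(1-b)) ≤ 1 + a*b/((1-a)*(1-b)+a*b) := by
  have hD3 : 0 < (1-a)*(1-b)+a*b := by nlinarith
  have hp3 : 0 ≤ a*b/((1-a)*(1-b)+a*b) := div_nonneg (by nlinarith) hD3.le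
  have h1 : (1-a)*(1-b)/(a*b+(1-a)*(1-b)) ≤ 1 := by
    rw [div_le_one (by nlinarith)]; nlinarith
  linarith

lemma abcase3 (a b : ℝ) (ha0 : 0<a) (ha1 : a<1) (hb0 : 0<b) (hb1 : b<1) :
    a*(1-b)/(a*(1-b)+(1-a)*b) ≤ a*b/((1-a)*(1-b)+a*b) + (1-b)*a/((1-a)*b+a*(1-b)) := by
  have hD3 : 0 < (1-a)*(1-b)+a*b := by nlinarith
  have hp3 : 0 ≤ a*b/((1-a)*(1-b)+a*b) := div_nonneg (by nlinarith) hD3.le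
  have e : a*(1-b)/(a*(1-b)+(1-a)*b) = (1-b)*a/((1-a)*b+a*(1-b)) := by ring
  rw [e]; linarith

lemma abcase4 (a b : ℝ) (ha0 : 0<a) (ha1 : a<1) (hb0 : 0<b) (hb1 : b<1) :
    (1-a)*b/(a*(1-b)+(1-a)*b) + (1-b)*a/((1-a)*b+a*(1-b)) ≤ 1 + a*b/((1-a)*(1-b)+a*b) := by
  have hD3 : 0 < (1-a)*(1-b)+a*b := by nlinarith
  have hD4 : 0 < a*(1-b)+(1-a)*b := by nlinarith
  have hD4' : 0 < (1-a)*b+a*(1-b) := by nlinarith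
  have hp3 : 0 ≤ a*b/((1-a)*(1-b)+a*b) := div_nonneg (by nlinarith) hD3.le
  have hsum : (1-a)*b/(a*(1-b)+(1-a)*b) + (1-b)*a/((1-a)*b+a*(1-b)) = 1 := by
    field_simp
    ring
  linarith

lemma cancel_aux (Sk P T : ℝ) (hS : Sk ≠ 0) (hP : P ≠ 0) : (Sk * P)⁻¹ * (T * P) = T / Sk := by
  field_simp

noncomputable def cfun (n : ℕ) (x xstar : Fin n → Bool) (k : Fin n) (b : Bool) : ℝ :=
  if Bool.xor (x k) b ≠ xstar k then 1 else 0


theorem expected_offspring_distance_upper_bound (n : ℕ) (hn : 0 < n)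
    (x xstar z : Fin n → Bool) (χ q : ℝ)
    (hχ0 : 0 < χ) (hχn : χ < n) (hq0 : 0 < q) (hqn : q < n)
    (hz : mutNoise n χ q {ω | noisyOffspring x ω = z} ≠ 0) :
    ∫ ω, (distToTarget (offspring x ω) xstar : ℝ)
        ∂(ProbabilityTheory.cond (mutNoise n χ q) {ω | noisyOffspring x ω = z}) ≤
      (distToTarget x xstar : ℝ)
      + n * ((q * χ / n ^ 2) / ((1 - χ / n) * (1 - q / n) + q * χ / n ^ 2))
      + ((distToTarget z xstar : ℝ) - (distToTarget x xstar : ℝ)) *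
          (((1 - q / n) * (χ / n)) / ((1 - χ / n) * (q / n) + (χ / n) * (1 - q / n))) := by
  have hn' : (0:ℝ) < n := Nat.cast_pos.mpr hn
  have ha0 : 0 < χ / n := div_pos hχ0 hn'
  have ha1 : χ / n < 1 := (div_lt_one hn').2 hχn
  have hb0 : 0 < q / n := div_pos hq0 hn'
  have hb1 : q / n < 1 := (div_lt_one hn').2 hqn
  have hαpos : ∀ (i : Fin n) (b : Bool), 0 < afun n x z χ q i b := by
    intro i b
    unfold afun
    apply mul_pos <;> (split <;> linarith)
  have hSpos : ∀ i : Fin n, 0 < afun n x z χ q i true + afun n x z χ q i false :=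
    fun i => add_pos (hαpos i true) (hαpos i false)
  rw [ProbabilityTheory.cond, integral_smul_measure, ENNReal.toReal_inv, smul_eq_mul,
    restrict_integral n x z χ q]
  have hden : ((mutNoise n χ q) {ω | noisyOffspring x ω = z}).toReal
      = ∑ u, ((mutNoise n χ q) {(u, evec n x z u)}).toReal := by
    have h1 : ((mutNoise n χ q) {ω | noisyOffspring x ω = z}).toReal
        = ∫ ω, (1:ℝ) ∂(mutNoise n χ q).restrict {ω | noisyOffspring x ω = z} := by
      rw [integral_const, Measure.real_def, Measure.restrict_apply_univ, smul_eq_mul, mul_one]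
    rw [h1, restrict_integral n x z χ q (fun _ => (1:ℝ))]
    simp only [mul_one]
  have hw : ∀ u, ((mutNoise n χ q) {(u, evec n x z u)}).toReal = ∏ i, afun n x z χ q i (u i) :=
    weight_eq n x z χ q ha0.le ha1.le hb0.le hb1.le
  have hf : ∀ u : Fin n → Bool,
      ((distToTarget (offspring x (u, evec n x z u)) xstar : ℕ) : ℝ)
        = ∑ k, cfun n x xstar k (u k) := by
    intro u
    rw [distToTarget, Finset.card_filter]
    push_cast
    refine Finset.sum_congr rfl fun k _ => ?_
    simp [offspring, cfun]
    split_ifs <;> simp_all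
  rw [hden]
  simp_rw [hw, hf]
  rw [sum_prod_bool (afun n x z χ q), sum_prod_bool_weighted (afun n x z χ q) (cfun n x xstar)]
  -- RHS as a sum
  have hdx : (distToTarget x xstar : ℝ) = ∑ k, (if x k ≠ xstar k then (1:ℝ) else 0) := by
    rw [distToTarget, Finset.card_filter]; push_cast; rfl
  have hdz : (distToTarget z xstar : ℝ) = ∑ k, (if z k ≠ xstar k then (1:ℝ) else 0) := by
    rw [distToTarget, Finset.card_filter]; push_cast; rfl
  rw [hdx, hdz]
  have hrhs : (∑ k, (if x k ≠ xstar k then (1:ℝ) else 0))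
      + n * ((q * χ / n ^ 2) / ((1 - χ / n) * (1 - q / n) + q * χ / n ^ 2))
      + ((∑ k, (if z k ≠ xstar k then (1:ℝ) else 0)) - ∑ k, (if x k ≠ xstar k then (1:ℝ) else 0)) *
          (((1 - q / n) * (χ / n)) / ((1 - χ / n) * (q / n) + (χ / n) * (1 - q / n)))
      = ∑ k, ((if x k ≠ xstar k then (1:ℝ) else 0)
          + ((q * χ / n ^ 2) / ((1 - χ / n) * (1 - q / n) + q * χ / n ^ 2))
          + ((if z k ≠ xstar k then (1:ℝ) else 0) - (if x k ≠ xstar k then (1:ℝ) else 0)) *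
              (((1 - q / n) * (χ / n)) / ((1 - χ / n) * (q / n) + (χ / n) * (1 - q / n)))) := by
    rw [Finset.sum_add_distrib, Finset.sum_add_distrib, Finset.sum_const, ← Finset.sum_mul,
      Finset.sum_sub_distrib, Finset.card_univ, Fintype.card_fin, nsmul_eq_mul]
  rw [hrhs, Finset.mul_sum]
  refine Finset.sum_le_sum fun k _ => ?_
  have hterm : (∏ i, (afun n x z χ q i true + afun n x z χ q i false))⁻¹ *
      ((afun n x z χ q k true * cfun n x xstar k true
          + afun n x z χ q k false * cfun n x xstar k false) *
        ∏ i ∈ Finset.univ.erase k, (afun n x z χ q i true + afun n x z χ q i false))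
      = (afun n x z χ q k true * cfun n x xstar k true
          + afun n x z χ q k false * cfun n x xstar k false)
        / (afun n x z χ q k true + afun n x z χ q k false) := by
    rw [← Finset.mul_prod_erase Finset.univ
      (fun i => afun n x z χ q i true + afun n x z χ q i false) (Finset.mem_univ k)]
    have hP : (0:ℝ) < ∏ i ∈ Finset.univ.erase k,
        (afun n x z χ q i true + afun n x z χ q i false) :=
      Finset.prod_pos fun i _ => hSpos i
    exact cancel_aux _ _ _ (hSpos k).ne' hP.ne'
  rw [hterm]
  have hq2 : q * χ / (n:ℝ) ^ 2 = (χ / n) * (q / n) := by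
    rw [div_mul_div_comm]; ring_nf
  rw [hq2]
  cases hx : x k <;> cases hzz : z k <;> cases hst : xstar k <;>
      simp only [afun, cfun, hx, hzz, hst] <;> norm_num <;>
    first
      | exact abcase1 _ _
      | exact abcase2 _ _ ha0 ha1 hb0 hb1
      | exact abcase3 _ _ ha0 ha1 hb0 hb1
      | exact abcase4 _ _ ha0 ha1 hb0 hb1
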